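/- In any straight-line drawing of a graph on n points in general position obtained by placing the vertices of each part V_i of an equitable K-partition inside pairwise far-apart tiny disks (so every quadruple of parts has same-type transversals), the number of crossing pairs of edges is at most (n/K)^4 · cr̄(H) + n^4/(2K), where H is the quotient drawing with one vertex per disk realizing cr̄ of the complete weighted quotient graph. -/

import Mathlib

open Finset
open scoped Classical BigOperators

noncomputable section

/-- Orientation determinant of an ordered triple of planar points. -/
def orient (p q r : ℝ × ℝ) : ℝ :=
  (q.1 - p.1) * (r.2 - p.2) - (q.2 - p.2) * (r.1 - p.1)

/-- A point placement is in general position if no three distinct vertices are collinear. -/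
def GenPos {V : Type*} (f : V → ℝ × ℝ) : Prop :=
  ∀ a b c : V, a ≠ b → a ≠ c → b ≠ c → orient (f a) (f b) (f c) ≠ 0

/-- Two straight-line segments cross: their interiors meet. -/
def SegCross (p q r s : ℝ × ℝ) : Prop :=
  (openSegment ℝ p q ∩ openSegment ℝ r s).Nonempty

/-- Weighted number of crossing pairs of edges in a straight-line drawing:
each unordered crossing pair {ab, cd} is counted once (via 8 ordered tuples). -/
def crossCount {V : Type*} [Fintype V] (w : V → V → ℝ) (f : V → ℝ × ℝ) : ℝ :=
  (∑ a : V, ∑ b : V, ∑ c : V, ∑ d : V,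
      if a ≠ b ∧ a ≠ c ∧ a ≠ d ∧ b ≠ c ∧ b ≠ d ∧ c ≠ d ∧
          SegCross (f a) (f b) (f c) (f d)
        then w a b * w c d else 0) / 8

/-- Rectilinear crossing number of an edge-weighted graph. -/
def wrcr (V : Type*) [Fintype V] (w : V → V → ℝ) : ℝ :=
  sInf {x : ℝ | ∃ f : V → ℝ × ℝ, Function.Injective f ∧ GenPos f ∧ crossCount w f = x}

/-- 0/1 edge weights of a simple graph. -/
def adjW {V : Type*} (G : SimpleGraph V) : V → V → ℝ :=
  fun u v => if G.Adj u v then 1 else 0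

/-- Rectilinear crossing number of a simple graph. -/
def rcr (n : ℕ) (G : SimpleGraph (Fin n)) : ℝ := wrcr (Fin n) (adjW G)

/-- Weighted number of edges between two vertex subsets. -/
def eW {V : Type*} (w : V → V → ℝ) (S T : Finset V) : ℝ :=
  ∑ u ∈ S, ∑ v ∈ T, w u v

/-- Number of edges of a simple graph between two vertex subsets
(edges inside the intersection counted twice). -/
def eG {n : ℕ} (G : SimpleGraph (Fin n)) (S T : Finset (Fin n)) : ℝ :=
  eW (adjW G) S T

/-- The part (fiber) of a colouring. -/
def fiber {n K : ℕ} (col : Fin n → Fin K) (i : Fin K) : Finset (Fin n) :=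
  Finset.univ.filter (fun v => col v = i)

/-- A colouring is an equitable partition: any two parts differ in size by at most one. -/
def EquitableCol {n K : ℕ} (col : Fin n → Fin K) : Prop :=
  ∀ i j : Fin K, (fiber col i).card ≤ (fiber col j).card + 1

/-- All transversals of three point sets have the same orientation. -/
def SameType3 (A B C : Finset (ℝ × ℝ)) : Prop :=
  ∀ a ∈ A, ∀ b ∈ B, ∀ c ∈ C, ∀ a' ∈ A, ∀ b' ∈ B, ∀ c' ∈ C,
    Real.sign (orient a b c) = Real.sign (orient a' b' c')

/-- Four point sets have same-type transversals. -/
def SameTypeQuad (A B C D : Finset (ℝ × ℝ)) : Prop :=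
  SameType3 A B C ∧ SameType3 A B D ∧ SameType3 A C D ∧ SameType3 B C D

/-- Four points are in convex position. -/
def ConvexPos4 (a b c d : ℝ × ℝ) : Prop :=
  a ∉ convexHull ℝ ({b, c, d} : Set (ℝ × ℝ)) ∧
  b ∉ convexHull ℝ ({a, c, d} : Set (ℝ × ℝ)) ∧
  c ∉ convexHull ℝ ({a, b, d} : Set (ℝ × ℝ)) ∧
  d ∉ convexHull ℝ ({a, b, c} : Set (ℝ × ℝ))



/-! ### Auxiliary lemmas -/

lemma orient_cycle (p q r : ℝ × ℝ) : orient q r p = orient p q r := by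
  simp only [orient]; ring

lemma orient_swap (p q r : ℝ × ℝ) : orient p r q = - orient p q r := by
  simp only [orient]; ring

lemma orient_identity (p q r s : ℝ × ℝ) :
    orient q r s = orient p q r - orient p q s + orient p r s := by
  simp only [orient]; ring

lemma orient_affine (p q r s : ℝ × ℝ) (a b : ℝ) (hab : a + b = 1) :
    orient p q (a • r + b • s) = a * orient p q r + b * orient p q s := by
  have hb : b = 1 - a := by linarith
  subst hb
  simp only [orient, Prod.fst_add, Prod.snd_add, Prod.smul_fst, Prod.smul_snd, smul_eq_mul]
  ring

lemma orient_self_seg {p q x : ℝ × ℝ} (hx : x ∈ openSegment ℝ p q) : orient p q x = 0 := by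
  obtain ⟨a, b, ha, hb, hab, rfl⟩ := hx
  rw [orient_affine p q p q a b hab]
  simp only [orient]
  ring

lemma cross_sign {p q r s : ℝ × ℝ} (h : SegCross p q r s)
    (hr : orient p q r ≠ 0) (hs : orient p q s ≠ 0) :
    orient p q r * orient p q s < 0 := by
  obtain ⟨x, hx1, hx2⟩ := h
  have h0 : orient p q x = 0 := orient_self_seg hx1
  obtain ⟨a, b, ha, hb, hab, rfl⟩ := hx2
  rw [orient_affine p q r s a b hab] at h0
  rcases hr.lt_or_gt with hA | hA
  · have hB : 0 < orient p q s := by nlinarith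
    exact mul_neg_of_neg_of_pos hA hB
  · have hB : orient p q s < 0 := by nlinarith
    exact mul_neg_of_pos_of_neg hA hB

lemma segCross_swap₂ {p q r s : ℝ × ℝ} : SegCross p q r s ↔ SegCross p q s r := by
  unfold SegCross; rw [openSegment_symm ℝ r s]

lemma segCross_swap₁ {p q r s : ℝ × ℝ} : SegCross p q r s ↔ SegCross q p r s := by
  unfold SegCross; rw [openSegment_symm ℝ p q]

lemma segCross_comm {p q r s : ℝ × ℝ} : SegCross p q r s ↔ SegCross r s p q := by
  unfold SegCross; rw [Set.inter_comm]

lemma not_double_cross {p q r s : ℝ × ℝ}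
    (hA : orient p q r ≠ 0) (hB : orient p q s ≠ 0)
    (hC : orient p r s ≠ 0) (hD : orient q r s ≠ 0)
    (h1 : SegCross p q r s) (h2 : SegCross p r q s) : False := by
  have hAB := cross_sign h1 hA hB
  have hCD : orient p r s * orient q r s < 0 := by
    have := cross_sign (segCross_comm.mp h1)
      (by rw [orient_cycle]; exact hC) (by rw [orient_cycle q r s]; exact hD)
    rwa [orient_cycle p r s, orient_cycle q r s] at this
  have hAC : 0 < orient p q r * orient p r s := by
    have := cross_sign h2 (by rw [orient_swap]; simpa using neg_ne_zero.mpr hA) hC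
    rw [orient_swap p q r] at this
    nlinarith
  have hBD : 0 < orient p q s * orient q r s := by
    have := cross_sign (segCross_comm.mp h2)
      (by rw [orient_cycle p q s]; exact hB)
      (by rw [orient_swap q r s]; simpa using neg_ne_zero.mpr hD)
    rw [orient_cycle p q s, orient_swap q r s] at this
    nlinarith
  have hid := orient_identity p q r s
  set A := orient p q r with hAdef
  set B := orient p q s
  set C := orient p r s
  set D := orient q r s
  rcases hA.lt_or_gt with h | h
  · have h1' : C < 0 := by nlinarith
    have h2' : 0 < B := by nlinarith
    have h3' : 0 < D := by nlinarith
    linarith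
  · have h1' : 0 < C := by nlinarith
    have h2' : B < 0 := by nlinarith
    have h3' : D < 0 := by nlinarith
    linarith

lemma cross_excl₁ {V : Type*} (f : V → ℝ × ℝ) (hf : GenPos f) {a b c d : V}
    (hab : a ≠ b) (hac : a ≠ c) (had : a ≠ d) (hbc : b ≠ c) (hbd : b ≠ d) (hcd : c ≠ d)
    (h1 : SegCross (f a) (f b) (f c) (f d)) (h2 : SegCross (f a) (f c) (f b) (f d)) :
    False :=
  not_double_cross (hf a b c hab hac hbc) (hf a b d hab had hbd)
    (hf a c d hac had hcd) (hf b c d hbc hbd hcd) h1 h2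

lemma cross_excl₂ {V : Type*} (f : V → ℝ × ℝ) (hf : GenPos f) {a b c d : V}
    (hab : a ≠ b) (hac : a ≠ c) (had : a ≠ d) (hbc : b ≠ c) (hbd : b ≠ d) (hcd : c ≠ d)
    (h1 : SegCross (f a) (f b) (f c) (f d)) (h2 : SegCross (f c) (f a) (f b) (f d)) :
    False :=
  cross_excl₁ f hf hab hac had hbc hbd hcd h1 (segCross_swap₁.mpr h2)

lemma cross_excl₃ {V : Type*} (f : V → ℝ × ℝ) (hf : GenPos f) {a b c d : V}
    (hab : a ≠ b) (hac : a ≠ c) (had : a ≠ d) (hbc : b ≠ c) (hbd : b ≠ d) (hcd : c ≠ d)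
    (h1 : SegCross (f a) (f b) (f c) (f d)) (h2 : SegCross (f b) (f c) (f a) (f d)) :
    False :=
  not_double_cross (hf a b d hab had hbd) (hf a b c hab hac hbc)
    (hf a d c had hac hcd.symm) (hf b d c hbd hbc hcd.symm)
    (segCross_swap₂.mp h1) (segCross_comm.mp h2)

section AuxCW
variable {n K : ℕ}

lemma aux_L1 (col : Fin n → Fin K) (F : Fin K → Fin n → ℝ) :
    ∑ a, F (col a) a = ∑ i, ∑ a ∈ fiber col i, F i a := by
  rw [← Finset.sum_fiberwise Finset.univ col (fun a => F (col a) a)]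
  exact Finset.sum_congr rfl fun i _ => Finset.sum_congr rfl fun a ha => by
    rw [(Finset.mem_filter.mp ha).2]

lemma aux_cw2 (col : Fin n → Fin K) (g : Fin n → Fin n → ℝ) (F : Fin K → Fin K → ℝ) :
    ∑ a, ∑ b, g a b * F (col a) (col b)
      = ∑ i, ∑ j, (∑ a ∈ fiber col i, ∑ b ∈ fiber col j, g a b) * F i j := by
  calc ∑ a, ∑ b, g a b * F (col a) (col b)
      = ∑ i, ∑ a ∈ fiber col i, ∑ b, g a b * F i (col b) :=
        aux_L1 col (fun i a => ∑ b, g a b * F i (col b))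
    _ = ∑ i, ∑ a ∈ fiber col i, ∑ j, ∑ b ∈ fiber col j, g a b * F i j :=
        Finset.sum_congr rfl fun i _ => Finset.sum_congr rfl fun a _ =>
          aux_L1 col (fun j b => g a b * F i j)
    _ = ∑ i, ∑ j, ∑ a ∈ fiber col i, ∑ b ∈ fiber col j, g a b * F i j :=
        Finset.sum_congr rfl fun i _ => Finset.sum_comm
    _ = ∑ i, ∑ j, (∑ a ∈ fiber col i, ∑ b ∈ fiber col j, g a b) * F i j := by
        refine Finset.sum_congr rfl fun i _ => Finset.sum_congr rfl fun j _ => ?_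
        rw [Finset.sum_mul]
        exact Finset.sum_congr rfl fun a _ => (Finset.sum_mul _ _ _).symm

lemma aux_cw4 (col : Fin n → Fin K) (w : Fin n → Fin n → ℝ)
    (P : Fin K → Fin K → Fin K → Fin K → Prop) :
    (∑ a, ∑ b, ∑ c, ∑ d,
        if P (col a) (col b) (col c) (col d) then w a b * w c d else 0)
      = ∑ i, ∑ j, ∑ k, ∑ l, if P i j k l then
          eW w (fiber col i) (fiber col j) * eW w (fiber col k) (fiber col l) else 0 := by
  set H : Fin K → Fin K → ℝ := fun k' l' => ∑ k, ∑ l,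
      eW w (fiber col k) (fiber col l) * (if P k' l' k l then (1:ℝ) else 0) with hH
  have step1 : ∀ a b : Fin n,
      (∑ c, ∑ d, if P (col a) (col b) (col c) (col d) then w a b * w c d else 0)
      = w a b * H (col a) (col b) := by
    intro a b
    have h2 := aux_cw2 col w (fun k l => if P (col a) (col b) k l then (1:ℝ) else 0)
    calc (∑ c, ∑ d, if P (col a) (col b) (col c) (col d) then w a b * w c d else 0)
        = ∑ c, ∑ d, w a b * (w c d *
            (if P (col a) (col b) (col c) (col d) then (1:ℝ) else 0)) := by
          refine Finset.sum_congr rfl fun c _ => Finset.sum_congr rfl fun d _ => ?_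
          by_cases h : P (col a) (col b) (col c) (col d) <;> simp [h]
      _ = w a b * ∑ c, ∑ d, w c d *
            (if P (col a) (col b) (col c) (col d) then (1:ℝ) else 0) := by
          rw [Finset.mul_sum]
          exact Finset.sum_congr rfl fun c _ => (Finset.mul_sum _ _ _).symm
      _ = w a b * H (col a) (col b) := by
          rw [h2, hH]
          simp only [eW]
  calc (∑ a, ∑ b, ∑ c, ∑ d,
        if P (col a) (col b) (col c) (col d) then w a b * w c d else 0)
      = ∑ a, ∑ b, w a b * H (col a) (col b) :=
        Finset.sum_congr rfl fun a _ => Finset.sum_congr rfl fun b _ => step1 a b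
    _ = ∑ i, ∑ j, (∑ a ∈ fiber col i, ∑ b ∈ fiber col j, w a b) * H i j :=
        aux_cw2 col w H
    _ = ∑ i, ∑ j, ∑ k, ∑ l, if P i j k l then
          eW w (fiber col i) (fiber col j) * eW w (fiber col k) (fiber col l) else 0 := by
        refine Finset.sum_congr rfl fun i _ => Finset.sum_congr rfl fun j _ => ?_
        rw [hH, Finset.mul_sum]
        refine Finset.sum_congr rfl fun k _ => ?_
        rw [Finset.mul_sum]
        refine Finset.sum_congr rfl fun l _ => ?_
        by_cases h : P i j k l
        · simp only [if_pos h, mul_one, eW]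
        · simp only [if_neg h, mul_zero]

lemma aux_sum_ite_card (P : Fin n → Fin n → Fin n → Fin n → Prop) :
    (∑ a, ∑ b, ∑ c, ∑ d, if P a b c d then (1:ℝ) else 0)
      = ((Finset.univ : Finset (Fin n × Fin n × Fin n × Fin n)).filter
          (fun t => P t.1 t.2.1 t.2.2.1 t.2.2.2)).card := by
  rw [Finset.card_filter]
  push_cast
  rw [Fintype.sum_prod_type]
  refine Finset.sum_congr rfl fun a _ => ?_
  rw [Fintype.sum_prod_type]
  refine Finset.sum_congr rfl fun b _ => ?_
  rw [Fintype.sum_prod_type]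

lemma aux_fiber_card (col : Fin n → Fin K) (hcol : EquitableCol col)
    (i : Fin K) : K * (fiber col i).card ≤ n + K := by
  have hsum : ∑ j, (fiber col j).card = n := by
    have := Finset.card_eq_sum_card_fiberwise
      (s := (Finset.univ : Finset (Fin n))) (t := Finset.univ) (f := col)
      (fun x _ => Finset.mem_univ _)
    simpa [fiber] using this.symm
  calc K * (fiber col i).card = ∑ _j : Fin K, (fiber col i).card := by
        simp [Finset.sum_const, mul_comm]
    _ ≤ ∑ j, ((fiber col j).card + 1) := Finset.sum_le_sum fun j _ => hcol i j
    _ = n + K := by rw [Finset.sum_add_distrib, hsum]; simp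

lemma aux_M_card (col : Fin n → Fin K) (hcol : EquitableCol col) :
    K * ((Finset.univ : Finset (Fin n × Fin n)).filter
        (fun p => p.1 ≠ p.2 ∧ col p.1 = col p.2)).card ≤ n * n := by
  set M := (Finset.univ : Finset (Fin n × Fin n)).filter
      (fun p => p.1 ≠ p.2 ∧ col p.1 = col p.2) with hM
  have hsub : M ⊆ Finset.univ.biUnion
      (fun x : Fin n => {x} ×ˢ ((fiber col (col x)).erase x)) := by
    intro p hp
    simp only [hM, Finset.mem_filter, Finset.mem_univ, true_and] at hp
    simp only [Finset.mem_biUnion, Finset.mem_univ, true_and, Finset.mem_product,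
      Finset.mem_singleton, Finset.mem_erase, fiber, Finset.mem_filter]
    exact ⟨p.1, rfl, fun e => hp.1 e.symm, hp.2.symm⟩
  have hcard : M.card ≤ ∑ x : Fin n, ((fiber col (col x)).card - 1) := by
    refine le_trans (Finset.card_le_card hsub) (le_trans (Finset.card_biUnion_le) ?_)
    refine Finset.sum_le_sum fun x _ => ?_
    rw [Finset.card_product, Finset.card_singleton, one_mul,
      Finset.card_erase_of_mem (by simp [fiber])]
  have hx : ∀ x : Fin n, K * ((fiber col (col x)).card - 1) ≤ n := by
    intro x
    have h1 : 1 ≤ (fiber col (col x)).card :=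
      Finset.card_pos.mpr ⟨x, by simp [fiber]⟩
    have e : K * ((fiber col (col x)).card - 1) + K = K * (fiber col (col x)).card := by
      have h2 : (fiber col (col x)).card - 1 + 1 = (fiber col (col x)).card :=
        Nat.succ_pred_eq_of_pos h1
      calc K * ((fiber col (col x)).card - 1) + K
          = K * (((fiber col (col x)).card - 1) + 1) := by ring
        _ = K * (fiber col (col x)).card := by rw [h2]
    have := aux_fiber_card col hcol (col x)
    omega
  calc K * M.card ≤ K * ∑ x : Fin n, ((fiber col (col x)).card - 1) :=
        Nat.mul_le_mul_left _ hcard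
    _ = ∑ x : Fin n, K * ((fiber col (col x)).card - 1) := Finset.mul_sum _ _ _
    _ ≤ ∑ _x : Fin n, n := Finset.sum_le_sum fun x _ => hx x
    _ = n * n := by simp [Finset.sum_const, mul_comm]

set_option maxHeartbeats 2000000 in
lemma aux_T_card (col : Fin n → Fin K) (hcol : EquitableCol col)
    (f : Fin n → ℝ × ℝ) (hfgp : GenPos f) :
    K * ((Finset.univ : Finset (Fin n × Fin n × Fin n × Fin n)).filter
        (fun t => (t.1 ≠ t.2.1 ∧ t.1 ≠ t.2.2.1 ∧ t.1 ≠ t.2.2.2 ∧ t.2.1 ≠ t.2.2.1 ∧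
            t.2.1 ≠ t.2.2.2 ∧ t.2.2.1 ≠ t.2.2.2 ∧
            SegCross (f t.1) (f t.2.1) (f t.2.2.1) (f t.2.2.2)) ∧
          ¬(col t.1 ≠ col t.2.1 ∧ col t.1 ≠ col t.2.2.1 ∧ col t.1 ≠ col t.2.2.2 ∧
            col t.2.1 ≠ col t.2.2.1 ∧ col t.2.1 ≠ col t.2.2.2 ∧
            col t.2.2.1 ≠ col t.2.2.2))).card ≤ 4 * n ^ 4 := by
  set M := (Finset.univ : Finset (Fin n × Fin n)).filter
      (fun p => p.1 ≠ p.2 ∧ col p.1 = col p.2) with hM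
  set T := (Finset.univ : Finset (Fin n × Fin n × Fin n × Fin n)).filter
      (fun t => (t.1 ≠ t.2.1 ∧ t.1 ≠ t.2.2.1 ∧ t.1 ≠ t.2.2.2 ∧ t.2.1 ≠ t.2.2.1 ∧
            t.2.1 ≠ t.2.2.2 ∧ t.2.2.1 ≠ t.2.2.2 ∧
            SegCross (f t.1) (f t.2.1) (f t.2.2.1) (f t.2.2.2)) ∧
          ¬(col t.1 ≠ col t.2.1 ∧ col t.1 ≠ col t.2.2.1 ∧ col t.1 ≠ col t.2.2.2 ∧
            col t.2.1 ≠ col t.2.2.1 ∧ col t.2.1 ≠ col t.2.2.2 ∧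
            col t.2.2.1 ≠ col t.2.2.2)) with hT
  have hTM : T.card ≤ (M ×ˢ ((Finset.univ : Finset (Fin n × Fin n)) ×ˢ
      (Finset.univ : Finset (Fin 4)))).card := by
    apply Finset.card_le_card_of_injOn (fun t =>
      if col t.1 = col t.2.1 then ((t.1, t.2.1), ((t.2.2.1, t.2.2.2), (0 : Fin 4)))
      else if col t.2.2.1 = col t.2.2.2 then ((t.2.2.1, t.2.2.2), ((t.1, t.2.1), 1))
      else if col t.1 = col t.2.2.1 then ((t.1, t.2.2.1), ((t.2.1, t.2.2.2), 0))
      else if col t.1 = col t.2.2.2 then ((t.1, t.2.2.2), ((t.2.1, t.2.2.1), 1))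
      else if col t.2.1 = col t.2.2.1 then ((t.2.1, t.2.2.1), ((t.1, t.2.2.2), 2))
      else ((t.2.1, t.2.2.2), ((t.1, t.2.2.1), 3)))
    · rintro ⟨a, b, c, d⟩ ht
      simp only [hT, Finset.mem_coe, Finset.mem_filter, Finset.mem_univ, true_and] at ht
      obtain ⟨⟨hab, hac, had, hbc, hbd, hcd, hseg⟩, hnc⟩ := ht
      dsimp only
      split_ifs with h1 h2 h3 h4 h5 <;>
        simp only [Finset.mem_coe, Finset.mem_product, Finset.mem_univ, and_true, true_and, hM,
          Finset.mem_filter]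
      · exact ⟨hab, h1⟩
      · exact ⟨hcd, h2⟩
      · exact ⟨hac, h3⟩
      · exact ⟨had, h4⟩
      · exact ⟨hbc, h5⟩
      · refine ⟨hbd, ?_⟩
        by_contra hbd2
        exact hnc ⟨h1, h3, h4, h5, hbd2, h2⟩
    · rintro ⟨a, b, c, d⟩ ht ⟨a', b', c', d'⟩ ht' heq
      simp only [hT, Finset.coe_filter, Set.mem_setOf_eq, Finset.mem_univ, true_and]
        at ht ht'
      obtain ⟨⟨hab, hac, had, hbc, hbd, hcd, hseg⟩, -⟩ := ht
      obtain ⟨⟨hab', hac', had', hbc', hbd', hcd', hseg'⟩, -⟩ := ht'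
      dsimp only at heq
      split_ifs at heq
      all_goals
        simp only [Prod.mk.injEq] at heq
      all_goals
        obtain ⟨⟨e1, e2⟩, ⟨e3, e4⟩, ek⟩ := heq
      all_goals
        first
        | exact absurd ek (by decide)
        | (subst e1; subst e2; subst e3; subst e4
           first
           | rfl
           | exact (cross_excl₁ f hfgp hab hac had hbc hbd hcd hseg hseg').elim
           | exact (cross_excl₂ f hfgp hab hac had hbc hbd hcd hseg hseg').elim
           | exact (cross_excl₃ f hfgp hab hac had hbc hbd hcd hseg hseg').elim)
  have hcardP : (M ×ˢ ((Finset.univ : Finset (Fin n × Fin n)) ×ˢ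
      (Finset.univ : Finset (Fin 4)))).card = M.card * (n * n * 4) := by
    rw [Finset.card_product, Finset.card_product]
    simp [Fintype.card_prod]
  calc K * T.card ≤ K * (M.card * (n * n * 4)) :=
        Nat.mul_le_mul_left _ (hcardP ▸ hTM)
    _ = (K * M.card) * (n * n * 4) := by ring
    _ ≤ (n * n) * (n * n * 4) :=
        Nat.mul_le_mul_right _ (aux_M_card col hcol)
    _ = 4 * n ^ 4 := by ring

end AuxCW

/-- In the clustered drawing of `G` (vertices of each part placed in tiny far-apart disks
around an optimal drawing `u` of the weighted quotient graph, so that crossings between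
four distinct parts match those of `u`), the number of crossing pairs is at most
`(n/K)^4 cr̄(H) + n^4/(2K)`, where `H` is the quotient drawing. -/
theorem stmt_13 (n K : ℕ) (hK : 0 < K) (hn : 0 < n) (G : SimpleGraph (Fin n))
    (col : Fin n → Fin K) (hcol : EquitableCol col)
    (wq : Fin K → Fin K → ℝ)
    (hwq : ∀ i j, wq i j = if i = j then 0 else
      eG G (fiber col i) (fiber col j) / ((n : ℝ) / K) ^ 2)
    (u : Fin K → ℝ × ℝ) (huinj : Function.Injective u) (hugp : GenPos u)
    (hopt : crossCount wq u = wrcr (Fin K) wq)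
    (f : Fin n → ℝ × ℝ) (hfinj : Function.Injective f) (hfgp : GenPos f)
    (hsame : ∀ a b c d : Fin n,
      col a ≠ col b → col a ≠ col c → col a ≠ col d →
      col b ≠ col c → col b ≠ col d → col c ≠ col d →
        (SegCross (f a) (f b) (f c) (f d) ↔
          SegCross (u (col a)) (u (col b)) (u (col c)) (u (col d)))) :
    crossCount (adjW G) f
      ≤ ((n : ℝ) / K) ^ 4 * wrcr (Fin K) wq + (n : ℝ) ^ 4 / (2 * K) := by
  have hK0 : (0:ℝ) < (K:ℝ) := by exact_mod_cast hK
  have hn0 : (0:ℝ) < (n:ℝ) := by exact_mod_cast hn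
  have hnK : (0:ℝ) < (n:ℝ)/K := by positivity
  set w : Fin n → Fin n → ℝ := adjW G with hwdef
  have hw0 : ∀ a b, 0 ≤ w a b := by
    intro a b; simp only [hwdef, adjW]; split <;> norm_num
  have hw1 : ∀ a b, w a b ≤ 1 := by
    intro a b; simp only [hwdef, adjW]; split <;> norm_num
  obtain ⟨P, hP⟩ : ∃ P : Fin K → Fin K → Fin K → Fin K → Prop, P = fun i j k l =>
      i ≠ j ∧ i ≠ k ∧ i ≠ l ∧ j ≠ k ∧ j ≠ l ∧ k ≠ l ∧
        SegCross (u i) (u j) (u k) (u l) := ⟨_, rfl⟩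
  obtain ⟨B, hB⟩ : ∃ B : Fin n → Fin n → Fin n → Fin n → Prop, B = fun a b c d =>
      (a ≠ b ∧ a ≠ c ∧ a ≠ d ∧ b ≠ c ∧ b ≠ d ∧ c ≠ d ∧
          SegCross (f a) (f b) (f c) (f d)) ∧
        ¬(col a ≠ col b ∧ col a ≠ col c ∧ col a ≠ col d ∧ col b ≠ col c ∧
          col b ≠ col d ∧ col c ≠ col d) := ⟨_, rfl⟩
  have hkey : crossCount w f * 8
      = (∑ a, ∑ b, ∑ c, ∑ d,
          if P (col a) (col b) (col c) (col d) then w a b * w c d else 0)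
        + (∑ a, ∑ b, ∑ c, ∑ d, if B a b c d then w a b * w c d else 0) := by
    simp only [crossCount]
    rw [div_mul_cancel₀ _ (by norm_num : (8:ℝ) ≠ 0)]
    have hrhs : (∑ a, ∑ b, ∑ c, ∑ d,
          if P (col a) (col b) (col c) (col d) then w a b * w c d else 0)
        + (∑ a, ∑ b, ∑ c, ∑ d, if B a b c d then w a b * w c d else 0)
        = ∑ a, ∑ b, ∑ c, ∑ d,
            ((if P (col a) (col b) (col c) (col d) then w a b * w c d else 0)
              + (if B a b c d then w a b * w c d else 0)) := by
      simp_rw [← Finset.sum_add_distrib]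
    rw [hrhs]
    refine Finset.sum_congr rfl fun a _ => Finset.sum_congr rfl fun b _ =>
      Finset.sum_congr rfl fun c _ => Finset.sum_congr rfl fun d _ => ?_
    by_cases hcd : col a ≠ col b ∧ col a ≠ col c ∧ col a ≠ col d ∧ col b ≠ col c ∧
        col b ≠ col d ∧ col c ≠ col d
    · obtain ⟨g1, g2, g3, g4, g5, g6⟩ := hcd
      have d1 : a ≠ b := fun e => g1 (by rw [e])
      have d2 : a ≠ c := fun e => g2 (by rw [e])
      have d3 : a ≠ d := fun e => g3 (by rw [e])
      have d4 : b ≠ c := fun e => g4 (by rw [e])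
      have d5 : b ≠ d := fun e => g5 (by rw [e])
      have d6 : c ≠ d := fun e => g6 (by rw [e])
      have hs := hsame a b c d g1 g2 g3 g4 g5 g6
      have hBf : ¬ B a b c d := by
        rw [hB]; exact fun h => h.2 ⟨g1, g2, g3, g4, g5, g6⟩
      rw [if_neg hBf, add_zero]
      by_cases hsf : SegCross (f a) (f b) (f c) (f d)
      · rw [if_pos ⟨d1, d2, d3, d4, d5, d6, hsf⟩,
          if_pos (show P (col a) (col b) (col c) (col d) by
            rw [hP]; exact ⟨g1, g2, g3, g4, g5, g6, hs.mp hsf⟩)]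
      · rw [if_neg (fun h : (a ≠ b ∧ a ≠ c ∧ a ≠ d ∧ b ≠ c ∧ b ≠ d ∧ c ≠ d ∧
            SegCross (f a) (f b) (f c) (f d)) => hsf h.2.2.2.2.2.2),
          if_neg (show ¬ P (col a) (col b) (col c) (col d) by
            rw [hP]; exact fun h => hsf (hs.mpr h.2.2.2.2.2.2))]
    · have hPf : ¬ P (col a) (col b) (col c) (col d) := by
        rw [hP]
        exact fun h => hcd ⟨h.1, h.2.1, h.2.2.1, h.2.2.2.1, h.2.2.2.2.1, h.2.2.2.2.2.1⟩
      rw [if_neg hPf, zero_add]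
      by_cases hfull : a ≠ b ∧ a ≠ c ∧ a ≠ d ∧ b ≠ c ∧ b ≠ d ∧ c ≠ d ∧
          SegCross (f a) (f b) (f c) (f d)
      · rw [if_pos hfull, if_pos (show B a b c d by rw [hB]; exact ⟨hfull, hcd⟩)]
      · rw [if_neg hfull, if_neg (show ¬ B a b c d by
          rw [hB]; exact fun h => hfull h.1)]
  have hgood : (∑ a, ∑ b, ∑ c, ∑ d,
        if P (col a) (col b) (col c) (col d) then w a b * w c d else 0)
      = ((n:ℝ)/K)^4 * (crossCount wq u * 8) := by
    rw [aux_cw4 col w P]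
    have he : ∀ i j : Fin K, i ≠ j →
        eW w (fiber col i) (fiber col j) = wq i j * ((n:ℝ)/K)^2 := by
      intro i j hij
      rw [hwq i j, if_neg hij, div_mul_cancel₀ _ (pow_ne_zero 2 (ne_of_gt hnK))]
      rw [hwdef]; rfl
    have hcc : crossCount wq u * 8
        = ∑ i, ∑ j, ∑ k, ∑ l, (if P i j k l then wq i j * wq k l else 0) := by
      simp only [crossCount]
      rw [div_mul_cancel₀ _ (by norm_num : (8:ℝ) ≠ 0)]
      refine Finset.sum_congr rfl fun i _ => Finset.sum_congr rfl fun j _ =>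
        Finset.sum_congr rfl fun k _ => Finset.sum_congr rfl fun l _ => ?_
      by_cases h : P i j k l
      · have h' : i ≠ j ∧ i ≠ k ∧ i ≠ l ∧ j ≠ k ∧ j ≠ l ∧ k ≠ l ∧
            SegCross (u i) (u j) (u k) (u l) := by rw [hP] at h; exact h
        rw [if_pos h', if_pos h]
      · have h' : ¬(i ≠ j ∧ i ≠ k ∧ i ≠ l ∧ j ≠ k ∧ j ≠ l ∧ k ≠ l ∧
            SegCross (u i) (u j) (u k) (u l)) := fun hc => h (by rw [hP]; exact hc)
        rw [if_neg h', if_neg h]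
    rw [hcc]
    calc (∑ i, ∑ j, ∑ k, ∑ l, if P i j k l then
            eW w (fiber col i) (fiber col j) * eW w (fiber col k) (fiber col l) else 0)
        = ∑ i, ∑ j, ∑ k, ∑ l, ((n:ℝ)/K)^4 *
            (if P i j k l then wq i j * wq k l else 0) := by
          refine Finset.sum_congr rfl fun i _ => Finset.sum_congr rfl fun j _ =>
            Finset.sum_congr rfl fun k _ => Finset.sum_congr rfl fun l _ => ?_
          by_cases h : P i j k l
          · have h' := h
            rw [hP] at h'
            rw [if_pos h, if_pos h, he i j h'.1, he k l h'.2.2.2.2.2.1]; ring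
          · rw [if_neg h, if_neg h, mul_zero]
      _ = ((n:ℝ)/K)^4 * ∑ i, ∑ j, ∑ k, ∑ l,
            (if P i j k l then wq i j * wq k l else 0) := by
          simp_rw [← Finset.mul_sum]
  have hbad : (∑ a, ∑ b, ∑ c, ∑ d, if B a b c d then w a b * w c d else 0)
      ≤ 4 * (n:ℝ)^4 / K := by
    have h1 : (∑ a, ∑ b, ∑ c, ∑ d, if B a b c d then w a b * w c d else 0)
        ≤ ∑ a, ∑ b, ∑ c, ∑ d, if B a b c d then (1:ℝ) else 0 := by
      refine Finset.sum_le_sum fun a _ => Finset.sum_le_sum fun b _ =>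
        Finset.sum_le_sum fun c _ => Finset.sum_le_sum fun d _ => ?_
      by_cases h : B a b c d
      · rw [if_pos h, if_pos h]
        nlinarith [hw0 a b, hw0 c d, hw1 a b, hw1 c d]
      · rw [if_neg h, if_neg h]
    have h2 := aux_sum_ite_card B
    have h3 := aux_T_card col hcol f hfgp
    have hcards : ((Finset.univ : Finset (Fin n × Fin n × Fin n × Fin n)).filter
          (fun t => B t.1 t.2.1 t.2.2.1 t.2.2.2)).card
        = ((Finset.univ : Finset (Fin n × Fin n × Fin n × Fin n)).filter
          (fun t => (t.1 ≠ t.2.1 ∧ t.1 ≠ t.2.2.1 ∧ t.1 ≠ t.2.2.2 ∧ t.2.1 ≠ t.2.2.1 ∧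
              t.2.1 ≠ t.2.2.2 ∧ t.2.2.1 ≠ t.2.2.2 ∧
              SegCross (f t.1) (f t.2.1) (f t.2.2.1) (f t.2.2.2)) ∧
            ¬(col t.1 ≠ col t.2.1 ∧ col t.1 ≠ col t.2.2.1 ∧ col t.1 ≠ col t.2.2.2 ∧
              col t.2.1 ≠ col t.2.2.1 ∧ col t.2.1 ≠ col t.2.2.2 ∧
              col t.2.2.1 ≠ col t.2.2.2))).card := by
      congr 1
      refine Finset.filter_congr fun t _ => ?_
      simp only [hB]
    calc (∑ a, ∑ b, ∑ c, ∑ d, if B a b c d then w a b * w c d else 0)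
        ≤ ∑ a, ∑ b, ∑ c, ∑ d, if B a b c d then (1:ℝ) else 0 := h1
      _ = (((Finset.univ : Finset (Fin n × Fin n × Fin n × Fin n)).filter
            (fun t => B t.1 t.2.1 t.2.2.1 t.2.2.2)).card : ℝ) := h2
      _ ≤ 4 * (n:ℝ)^4 / K := by
          rw [le_div_iff₀ hK0, hcards]
          have h6 : ((K * ((Finset.univ : Finset (Fin n × Fin n × Fin n × Fin n)).filter
              (fun t => (t.1 ≠ t.2.1 ∧ t.1 ≠ t.2.2.1 ∧ t.1 ≠ t.2.2.2 ∧ t.2.1 ≠ t.2.2.1 ∧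
                  t.2.1 ≠ t.2.2.2 ∧ t.2.2.1 ≠ t.2.2.2 ∧
                  SegCross (f t.1) (f t.2.1) (f t.2.2.1) (f t.2.2.2)) ∧
                ¬(col t.1 ≠ col t.2.1 ∧ col t.1 ≠ col t.2.2.1 ∧ col t.1 ≠ col t.2.2.2 ∧
                  col t.2.1 ≠ col t.2.2.1 ∧ col t.2.1 ≠ col t.2.2.2 ∧
                  col t.2.2.1 ≠ col t.2.2.2))).card : ℕ) : ℝ)
              ≤ (((4 * n ^ 4 : ℕ) : ℕ) : ℝ) := Nat.cast_le.mpr h3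
          push_cast at h6
          linarith
  have hdiv : 4*(n:ℝ)^4/K = ((n:ℝ)^4/(2*(K:ℝ))) * 8 := by
    field_simp; ring
  have h8 : crossCount w f * 8
      ≤ (((n:ℝ)/K)^4 * wrcr (Fin K) wq) * 8 + ((n:ℝ)^4/(2*(K:ℝ))) * 8 := by
    rw [hkey, hgood, hopt]
    nlinarith [hbad]
  linarith
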